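/- Let p be an odd prime, ℓ a positive integer not divisible by p, and let a be the remainder of ℓ modulo p. Define ν_i := ⌊(a + iℓ)/p⌋ for 0 ≤ i ≤ p−1 and n_i := min{ν_{i+j} − ν_j : 0 ≤ j ≤ p−1−i} for 0 ≤ i ≤ p−1. Then n_i = ν_i for every 0 ≤ i ≤ p−1 if and only if a divides p−1. -/

import Mathlib

lemma myfloor (n p : ℕ) : ⌊((n:ℝ))/(p:ℝ)⌋ = ((n / p : ℕ) : ℤ) := by
  have h : ((n:ℝ)/(p:ℝ)) = (((n:ℚ)/(p:ℚ) : ℚ) : ℝ) := by push_cast; ring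
  rw [h, Rat.floor_cast,
    show ((n:ℚ)/(p:ℚ)) = (((n:ℤ):ℚ)/((p:ℕ):ℚ)) by push_cast; ring,
    Rat.floor_intCast_div_natCast]
  exact (Int.natCast_ediv n p).symm

-- key equivalence
lemma aux_key (p a : ℕ) (hp0 : 0 < p) (hap : a < p) (S T : ℕ) :
    a*(S+1)/p + a*(T+1)/p ≤ a*(S+T+1)/p ↔ a ≤ a*(S+1) % p + a*(T+1) % p := by
  have h1 := Nat.div_add_mod (a*(S+1)) p
  have h2 := Nat.div_add_mod (a*(T+1)) p
  have h3 := Nat.div_add_mod (a*(S+T+1)) p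
  have hid : a*(S+1) + a*(T+1) = a*(S+T+1) + a := by ring
  have hr1 : a*(S+1) % p < p := Nat.mod_lt _ hp0
  have hr2 : a*(T+1) % p < p := Nat.mod_lt _ hp0
  have hr3 : a*(S+T+1) % p < p := Nat.mod_lt _ hp0
  constructor
  · intro h
    have h4 : p * (a*(S+1)/p + a*(T+1)/p) ≤ p * (a*(S+T+1)/p) :=
      Nat.mul_le_mul_left _ h
    have h5 : p * (a*(S+1)/p + a*(T+1)/p) = p * (a*(S+1)/p) + p * (a*(T+1)/p) := by ring
    omega
  · intro h
    by_contra hcon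
    push_neg at hcon
    have h6 : a*(S+T+1)/p + 1 ≤ a*(S+1)/p + a*(T+1)/p := hcon
    have h4 : p * (a*(S+T+1)/p + 1) ≤ p * (a*(S+1)/p + a*(T+1)/p) :=
      Nat.mul_le_mul_left _ h6
    have h5 : p * (a*(S+1)/p + a*(T+1)/p) = p * (a*(S+1)/p) + p * (a*(T+1)/p) := by ring
    have h7 : p * (a*(S+T+1)/p + 1) = p * (a*(S+T+1)/p) + p := by ring
    omega

lemma aux_NT2 (p a m : ℕ) (hp : p.Prime) (ha1 : 1 ≤ a) (hap : a < p)
    (hm : p - 1 = a * m) (S T : ℕ) (hST : S + T ≤ p - 1) :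
    a ≤ a*(S+1) % p + a*(T+1) % p := by
  have hp2 : 2 ≤ p := hp.two_le
  have hp0 : 0 < p := by omega
  have hm1 : 1 ≤ m := by
    rcases Nat.eq_zero_or_pos m with h | h
    · subst h; simp at hm; omega
    · exact h
  have hpna : ¬ p ∣ a := fun h => absurd (Nat.le_of_dvd (by omega) h) (by omega)
  have hcop : Nat.Coprime a p := (hp.coprime_iff_not_dvd.mpr hpna).symm
  set s := S + 1 with hs
  set t := T + 1 with ht
  have hsp : s ≤ p := by omega
  have htp : t ≤ p := by omega
  by_contra hcon
  push_neg at hcon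
  -- sublemma: if residue is 0 then x = p
  have zero_case : ∀ x, 1 ≤ x → x ≤ p → a * x % p = 0 → x = p := by
    intro x hx1 hxp h0
    have hdvd : p ∣ a * x := Nat.dvd_of_mod_eq_zero h0
    have : p ∣ x := (Nat.Coprime.dvd_of_dvd_mul_left (hcop.symm) hdvd)
    have := Nat.le_of_dvd (by omega) this
    omega
  -- sublemma: small nonzero residue forces x ≥ p - c*m
  have key2 : ∀ x c, 1 ≤ c → c < a → x ≤ p → a * x % p = c → p - c * m ≤ x := by
    intro x c hc1 hca hxp hx
    have hcm : c * m ≤ (a-1) * m := Nat.mul_le_mul_right _ (by omega)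
    have ham1 : (a-1) * m = a * m - m := by
      rw [Nat.sub_one_mul]
    have hcm2 : c * m ≤ p - 1 - m := by omega
    have hpm : p = a * m + 1 := by omega
    have hmz : (p:ℤ) = (a:ℤ) * m + 1 := by exact_mod_cast hpm
    have e1 : (a:ℤ) * ((p:ℤ) - (c:ℤ)*(m:ℤ)) = ((a:ℤ) - (c:ℤ))*(p:ℤ) + (c:ℤ) := by
      linear_combination (c:ℤ) * hmz
    have e1nat : a * (p - c * m) = (a - c) * p + c := by
      have h1 : (c:ℤ) * (m:ℤ) ≤ (p:ℤ) := by push_cast; omega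
      have h2 : (c:ℤ) ≤ (a:ℤ) := by push_cast; omega
      have := e1
      zify [show c*m ≤ p by omega, show c ≤ a by omega]
      linear_combination this
    have hmod2 : a * (p - c * m) % p = c := by
      rw [e1nat, Nat.add_comm, Nat.add_mul_mod_self_right, Nat.mod_eq_of_lt (by omega)]
    have hmodeq : a * x ≡ a * (p - c*m) [MOD p] := by
      unfold Nat.ModEq; rw [hx, hmod2]
    have hxeq : x ≡ p - c*m [MOD p] := Nat.ModEq.cancel_left_of_coprime hcop.symm hmodeq
    have hcmpos : 1 ≤ c * m := Nat.mul_pos hc1 hm1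
    have hlt : p - c*m < p := by omega
    have : x % p = p - c*m := by
      have := hxeq
      unfold Nat.ModEq at this
      rw [Nat.mod_eq_of_lt hlt] at this
      exact this
    have := Nat.mod_le x p
    omega
  -- now case split
  rcases Nat.eq_zero_or_pos (a * s % p) with hc0 | hc1
  · have hsep : s = p := zero_case s (by omega) hsp hc0
    have : t = 1 := by omega
    rw [this] at hcon
    have : a * 1 % p = a := by rw [Nat.mul_one, Nat.mod_eq_of_lt hap]
    omega
  rcases Nat.eq_zero_or_pos (a * t % p) with hd0 | hd1
  · have htep : t = p := zero_case t (by omega) htp hd0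
    have : s = 1 := by omega
    rw [this] at hcon
    have : a * 1 % p = a := by rw [Nat.mul_one, Nat.mod_eq_of_lt hap]
    omega
  · set c := a * s % p with hc
    set d := a * t % p with hd
    have hca : c < a := by omega
    have hda : d < a := by omega
    have h1 := key2 s c hc1 hca hsp rfl
    have h2 := key2 t d hd1 hda htp rfl
    have h3 : (c + d) * m ≤ (a - 1) * m := Nat.mul_le_mul_right _ (by omega)
    have h4 : (a-1) * m = a * m - m := by rw [Nat.sub_one_mul]
    have h5 : (c + d) * m = c * m + d * m := by rw [Nat.add_mul]
    omega

lemma aux_NT1 (p a : ℕ) (hp : p.Prime) (ha1 : 1 ≤ a) (hap : a < p)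
    (hnd : ¬ a ∣ (p - 1)) :
    ∃ S T : ℕ, S + T ≤ p - 1 ∧ a*(S+1) % p + a*(T+1) % p < a := by
  have hp2 : 2 ≤ p := hp.two_le
  have ha2 : 2 ≤ a := by
    by_contra h
    have h1 : a = 1 := by omega
    exact hnd (by rw [h1]; exact one_dvd _)
  set b := (p - 1) % a with hbdef
  set m := (p - 1) / a with hmdef
  have hb1 : 1 ≤ b := by
    rcases Nat.eq_zero_or_pos b with h | h
    · exact absurd (Nat.dvd_of_mod_eq_zero h) hnd
    · exact h
  have hba : b < a := Nat.mod_lt _ (by omega)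
  have hdm := Nat.div_add_mod (p - 1) a
  rw [← hmdef, ← hbdef] at hdm   -- a * m + b = p - 1
  have hpd : p = a * m + (b + 1) := by omega
  have hpna : ¬ p ∣ a := fun h => absurd (Nat.le_of_dvd (by omega) h) (by omega)
  have hcop : Nat.Coprime a p := (hp.coprime_iff_not_dvd.mpr hpna).symm
  have hcopb : Nat.Coprime a (b + 1) := by
    have h2 : Nat.Coprime a ((b+1) + a * m) := by
      rw [hpd, Nat.add_comm] at hcop; exact hcop
    exact (Nat.coprime_add_mul_left_right a (b+1) m).mp h2
  have hba1 : b + 1 < a := by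
    rcases Nat.lt_or_ge (b+1) a with h | h
    · exact h
    · have h1 : b + 1 = a := by omega
      rw [h1] at hcopb
      have := (Nat.coprime_self _).mp hcopb
      omega
  have hm1 : 1 ≤ m := by
    rcases Nat.eq_zero_or_pos m with h | h
    · rw [h, Nat.mul_zero] at hpd; omega
    · exact h
  -- construct c1 via ZMod a
  haveI : NeZero a := ⟨by omega⟩
  set u : (ZMod a)ˣ := ZMod.unitOfCoprime (b+1) hcopb.symm with hu
  set v : ZMod a := -(((u⁻¹ : (ZMod a)ˣ)) : ZMod a) with hv
  set c1 : ℕ := v.val with hc1def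
  have hc1a : c1 < a := ZMod.val_lt v
  have hval : ((c1:ℕ) : ZMod a) = v := ZMod.natCast_rightInverse v
  have hbu : ((b+1 : ℕ) : ZMod a) = (u : ZMod a) := by
    rw [hu, ZMod.coe_unitOfCoprime]
  have hub2 : (u : ZMod a) = (b : ZMod a) + 1 := by rw [← hbu]; push_cast; ring
  have hvu : v * (u : ZMod a) = -1 := by
    rw [hv, neg_mul, ← Units.val_mul]
    simp
  have ha1' : ((a - 1 : ℕ) : ZMod a) = -1 := by
    rw [Nat.cast_sub (by omega : 1 ≤ a), ZMod.natCast_self, Nat.cast_one]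
    ring
  have hc1 : (c1 * (b+1)) % a = a - 1 := by
    have hcast : ((c1 * (b+1) : ℕ) : ZMod a) = ((a - 1 : ℕ) : ZMod a) := by
      rw [Nat.cast_mul, hval, hbu, ha1']
      exact hvu
    have h3 := (ZMod.natCast_eq_natCast_iff _ _ _).mp hcast
    unfold Nat.ModEq at h3
    rw [Nat.mod_eq_of_lt (by omega : a - 1 < a)] at h3
    exact h3
  have hc1pos : 1 ≤ c1 := by
    rcases Nat.eq_zero_or_pos c1 with h | h
    · rw [h, Nat.zero_mul] at hc1; simp at hc1; omega
    · exact h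
  set c2 : ℕ := a - 1 - c1 with hc2def
  have hsum12 : c1 + c2 ≤ a - 1 := by omega
  have hc2 : (c2 * (b+1)) % a = a - b := by
    have hc2cast : ((c2:ℕ) : ZMod a) = -1 - v := by
      rw [hc2def, Nat.cast_sub (by omega : c1 ≤ a - 1), ha1', hval]
    have hab' : ((a - b : ℕ) : ZMod a) = -(b : ZMod a) := by
      rw [Nat.cast_sub (le_of_lt hba), ZMod.natCast_self]
      ring
    have hcast : ((c2 * (b+1) : ℕ) : ZMod a) = ((a - b : ℕ) : ZMod a) := by
      rw [Nat.cast_mul, hc2cast, hbu, hab']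
      linear_combination -hvu - hub2
    have h3 := (ZMod.natCast_eq_natCast_iff _ _ _).mp hcast
    unfold Nat.ModEq at h3
    rw [Nat.mod_eq_of_lt (by omega : a - b < a)] at h3
    exact h3
  have hc2pos : 1 ≤ c2 := by
    rcases Nat.eq_zero_or_pos c2 with h | h
    · rw [h, Nat.zero_mul] at hc2; simp at hc2; omega
    · exact h
  -- residues helper
  have hpa : p % a = b + 1 := by
    rw [hpd, Nat.mul_add_mod, Nat.mod_eq_of_lt hba1]
  have helper : ∀ c w : ℕ, 1 ≤ c → c < a → 1 ≤ w → w < a → (c * (b+1)) % a = a - w →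
      (1 ≤ (c*p + (a-1))/a ∧ c * p ≤ a * ((c*p + (a-1))/a) ∧
       a * ((c*p + (a-1))/a) ≤ c * p + (a-1) ∧ a * ((c*p + (a-1))/a) % p = w) := by
    intro c w hcpos hca hw1 hwa hcw
    set x := (c*p + (a-1))/a with hx
    have h0 := Nat.div_add_mod (c*p + (a-1)) a
    rw [← hx] at h0   -- a * x + (c*p + (a-1)) % a = c*p+(a-1)
    have h0' : (c*p + (a-1)) % a < a := Nat.mod_lt _ (by omega)
    have hcp : p ≤ c * p := Nat.le_mul_of_pos_left p hcpos
    have hub : a * x ≤ c * p + (a-1) := by omega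
    have hlb : c * p ≤ a * x := by omega
    have hx1 : 1 ≤ x := by
      rcases Nat.eq_zero_or_pos x with h | h
      · rw [h, Nat.mul_zero] at hlb; omega
      · exact h
    refine ⟨hx1, hlb, hub, ?_⟩
    set e := a * x - c * p with he
    have hea : e ≤ a - 1 := by omega
    have hax : a * x = e + c * p := by omega
    have hmodp : a * x % p = e := by
      rw [hax, Nat.add_mul_mod_self_right, Nat.mod_eq_of_lt (by omega : e < p)]
    have hmoda : (e + c * p) % a = 0 := by
      rw [← hax, Nat.mul_mod_right]
    have hcpa : (c * p) % a = a - w := by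
      rw [Nat.mul_mod, hpa, Nat.mod_eq_of_lt hca, hcw]
    rw [Nat.add_mod, hcpa, Nat.mod_eq_of_lt (by omega : e < a)] at hmoda
    -- hmoda : (e + (a - w)) % a = 0, with a - w ∈ [1, a-1], e ≤ a-1 ⇒ e = w
    have hew : e = w := by
      rcases Nat.lt_or_ge (e + (a - w)) a with h | h
      · rw [Nat.mod_eq_of_lt h] at hmoda; omega
      · rw [Nat.mod_eq_sub_mod h, Nat.mod_eq_of_lt (by omega)] at hmoda; omega
    rw [hmodp, hew]
  obtain ⟨hx1, _, hxu, hxr⟩ := helper c1 1 hc1pos (by omega) (by omega) (by omega) (by rw [hc1])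
  obtain ⟨hy1, _, hyu, hyr⟩ := helper c2 b hc2pos (by omega) hb1 (by omega) hc2
  set s := (c1*p + (a-1))/a with hs
  set t := (c2*p + (a-1))/a with ht
  -- s + t ≤ p + 1
  have hstp : s + t ≤ p + 1 := by
    have h1 : a * (s + t) = a * s + a * t := by ring
    have h2 : c1 * p + c2 * p ≤ (a-1) * p := by
      rw [← Nat.add_mul]
      exact Nat.mul_le_mul_right _ hsum12
    have h3 : (a-1) * p + p = a * p := by
      rw [Nat.sub_one_mul]
      have : p ≤ a * p := Nat.le_mul_of_pos_left p (by omega)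
      omega
    have h4 : a * (s + t) ≤ a * (p + 1) := by
      have h5 : a * (p+1) = a * p + a := by ring
      omega
    exact Nat.le_of_mul_le_mul_left h4 (by omega)
  refine ⟨s - 1, t - 1, by omega, ?_⟩
  rw [show s - 1 + 1 = s by omega, show t - 1 + 1 = t by omega, hxr, hyr]
  omega

/-- For an odd prime `p`, a positive integer `ℓ` not divisible by `p`, with
`a` the remainder of `ℓ` mod `p`, `ν_i = ⌊(a + iℓ)/p⌋` and
`n_i = min { ν_{i+j} - ν_j : 0 ≤ j ≤ p-1-i }`, one has `n_i = ν_i` for all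
`0 ≤ i ≤ p-1` if and only if `a ∣ p - 1`. -/
theorem statement6
    (p : ℕ) (hp : p.Prime) (hodd : Odd p)
    (ℓ : ℕ) (hℓ : 0 < ℓ) (hpℓ : ¬ p ∣ ℓ)
    (a : ℕ) (ha : a = ℓ % p)
    (ν : ℕ → ℤ) (hν : ∀ i, ν i = ⌊((a + i * ℓ : ℕ) : ℝ) / (p : ℝ)⌋)
    (nn : ℕ → ℤ)
    (hnn : ∀ i, i ≤ p - 1 →
      IsLeast {d : ℤ | ∃ j : ℕ, j ≤ p - 1 - i ∧ d = ν (i + j) - ν j} (nn i)) :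
    (∀ i, i ≤ p - 1 → nn i = ν i) ↔ a ∣ p - 1 := by
  have hp2 : 2 ≤ p := hp.two_le
  have hp0 : 0 < p := by omega
  have ha1 : 1 ≤ a := by
    rw [ha]
    rcases Nat.eq_zero_or_pos (ℓ % p) with h | h
    · exact absurd (Nat.dvd_of_mod_eq_zero h) hpℓ
    · exact h
  have hap : a < p := ha ▸ Nat.mod_lt _ hp0
  set q := ℓ / p with hq
  have hlq : ℓ = p * q + a := by rw [ha, hq]; exact (Nat.div_add_mod ℓ p).symm
  have hν' : ∀ x : ℕ, ν x = ((a + x * ℓ) / p : ℕ) := fun x => (hν x).trans (myfloor _ _)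
  have hνF : ∀ x : ℕ, ν x = (x * q : ℕ) + ((a * (x+1)) / p : ℕ) := by
    intro x
    rw [hν' x]
    have h1 : a + x * ℓ = a * (x+1) + (x*q) * p := by rw [hlq]; ring
    rw [h1, Nat.add_mul_div_right _ _ hp0]
    push_cast
    ring
  have hν0 : ν 0 = 0 := by
    rw [hν' 0]
    norm_num [Nat.div_eq_of_lt hap]
  constructor
  · intro hA
    by_contra hnd
    obtain ⟨S, T, hST, hr⟩ := aux_NT1 p a hp ha1 hap hnd
    have hiS : S ≤ p - 1 := by omega
    obtain ⟨hmem, hlbd⟩ := hnn S hiS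
    have hd : (ν (S + T) - ν T) ∈ {d : ℤ | ∃ j : ℕ, j ≤ p - 1 - S ∧ d = ν (S + j) - ν j} :=
      ⟨T, by omega, rfl⟩
    have h1 : nn S ≤ ν (S + T) - ν T := hlbd hd
    rw [hA S hiS] at h1
    rw [hνF S, hνF T, hνF (S + T)] at h1
    have h2 : (↑(a * (S+1) / p) + ↑(a * (T+1) / p) : ℤ) ≤ ↑(a * (S+T+1) / p) := by
      push_cast at h1 ⊢
      linarith
    have h3 : a*(S+1)/p + a*(T+1)/p ≤ a*(S+T+1)/p := by exact_mod_cast h2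
    have h4 := (aux_key p a hp0 hap S T).mp h3
    omega
  · intro hdvd i hi
    obtain ⟨m, hm⟩ := hdvd
    obtain ⟨hmem, hlbd⟩ := hnn i hi
    obtain ⟨j, hj, hval⟩ := hmem
    have hup : nn i ≤ ν i := by
      have h0 : (ν (i + 0) - ν 0) ∈ {d : ℤ | ∃ j : ℕ, j ≤ p - 1 - i ∧ d = ν (i + j) - ν j} :=
        ⟨0, by omega, rfl⟩
      have h1 := hlbd h0
      rw [add_zero, hν0] at h1
      omega
    have hlow : (ν i : ℤ) ≤ ν (i + j) - ν j := by
      have hST : i + j ≤ p - 1 := by omega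
      have hk := (aux_key p a hp0 hap i j).mpr (aux_NT2 p a m hp ha1 hap hm i j hST)
      rw [hνF i, hνF j, hνF (i+j)]
      have h2 : (↑(a*(i+1)/p) + ↑(a*(j+1)/p) : ℤ) ≤ ↑(a*(i+j+1)/p) := by exact_mod_cast hk
      push_cast at h2 ⊢
      linarith
    omega
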